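/- Let S ⊆ ℝⁿ be a subspace with orthogonal projection P_S and residualizer M_S = I − P_S, and let W ∈ ℝ^{n×k} be a matrix. Let T = S + col(W) be the subspace spanned by S together with the columns of W. Then the orthogonal projection onto T satisfies P_T = P_S + P_{M_S W}, where P_{M_S W} is the orthogonal projection onto the column space of M_S W. Consequently, for every Y ∈ ℝⁿ, Yᵀ(M_S − M_T)Y = (M_S Y)ᵀ P_{M_S W} (M_S Y). -/

import Mathlib

open scoped RealInnerProductSpace

/-- Frisch–Waugh–Lovell decomposition: adding the columns of `W` to a design
spanning `S` yields projection `P_T = P_S + P_{M_S W}`, and the residual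
sum-of-squares improvement equals the quadratic form of the residual `M_S Y`
in the projection onto the residualized columns. -/
theorem frisch_waugh_lovell {n k : ℕ}
    (S : Submodule ℝ (EuclideanSpace ℝ (Fin n)))
    (W : Fin k → EuclideanSpace ℝ (Fin n))
    (T U : Submodule ℝ (EuclideanSpace ℝ (Fin n)))
    (hT : T = S ⊔ Submodule.span ℝ (Set.range W))
    (hU : U = Submodule.span ℝ
      (Set.range fun j => W j - (Submodule.orthogonalProjectionOnto S (W j) : EuclideanSpace ℝ (Fin n)))) :
    (∀ Y : EuclideanSpace ℝ (Fin n),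
        (Submodule.orthogonalProjectionOnto T Y : EuclideanSpace ℝ (Fin n)) =
          (Submodule.orthogonalProjectionOnto S Y : EuclideanSpace ℝ (Fin n)) +
            (Submodule.orthogonalProjectionOnto U Y : EuclideanSpace ℝ (Fin n))) ∧
      ∀ Y : EuclideanSpace ℝ (Fin n),
        ⟪Y, Y - (Submodule.orthogonalProjectionOnto S Y : EuclideanSpace ℝ (Fin n))⟫ -
            ⟪Y, Y - (Submodule.orthogonalProjectionOnto T Y : EuclideanSpace ℝ (Fin n))⟫ =
          ⟪Y - (Submodule.orthogonalProjectionOnto S Y : EuclideanSpace ℝ (Fin n)),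
            (Submodule.orthogonalProjectionOnto U
              (Y - (Submodule.orthogonalProjectionOnto S Y : EuclideanSpace ℝ (Fin n))) :
                EuclideanSpace ℝ (Fin n))⟫ := by
  -- U ≤ Sᗮ
  have hUS : U ≤ Sᗮ := by
    rw [hU, Submodule.span_le]
    rintro _ ⟨j, rfl⟩
    exact Submodule.sub_starProjection_mem_orthogonal (W j)
  have hSU : S ≤ Uᗮ := fun x hx => by
    rw [Submodule.mem_orthogonal]
    intro u hu
    exact (real_inner_comm x u ▸ (Submodule.mem_orthogonal S u).1 (hUS hu) x hx)
  -- T = S ⊔ U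
  have hTSU : T = S ⊔ U := by
    rw [hT, hU]
    apply le_antisymm
    · apply sup_le le_sup_left
      rw [Submodule.span_le]
      rintro _ ⟨j, rfl⟩
      have : W j = (W j - (Submodule.orthogonalProjectionOnto S (W j) : EuclideanSpace ℝ (Fin n))) +
          (Submodule.orthogonalProjectionOnto S (W j) : EuclideanSpace ℝ (Fin n)) := by abel
      rw [this]
      exact Submodule.add_mem _
        (Submodule.mem_sup_right (Submodule.subset_span ⟨j, rfl⟩))
        (Submodule.mem_sup_left (Submodule.orthogonalProjectionOnto S (W j)).2)
    · apply sup_le le_sup_left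
      rw [Submodule.span_le]
      rintro _ ⟨j, rfl⟩
      exact Submodule.sub_mem _
        (Submodule.mem_sup_right (Submodule.subset_span ⟨j, rfl⟩))
        (Submodule.mem_sup_left (Submodule.orthogonalProjectionOnto S (W j)).2)
  have key : ∀ Y : EuclideanSpace ℝ (Fin n),
      (Submodule.orthogonalProjectionOnto T Y : EuclideanSpace ℝ (Fin n)) =
        (Submodule.orthogonalProjectionOnto S Y : EuclideanSpace ℝ (Fin n)) +
          (Submodule.orthogonalProjectionOnto U Y : EuclideanSpace ℝ (Fin n)) := by
    intro Y
    apply Submodule.eq_starProjection_of_mem_orthogonal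
    · rw [hTSU]
      exact Submodule.add_mem _ (Submodule.mem_sup_left (Submodule.orthogonalProjectionOnto S Y).2)
        (Submodule.mem_sup_right (Submodule.orthogonalProjectionOnto U Y).2)
    · rw [hTSU, ← Submodule.inf_orthogonal]
      constructor
      · have h1 : Y - (Submodule.orthogonalProjectionOnto S Y : EuclideanSpace ℝ (Fin n)) ∈ Sᗮ :=
          Submodule.sub_starProjection_mem_orthogonal Y
        have h2 : (Submodule.orthogonalProjectionOnto U Y : EuclideanSpace ℝ (Fin n)) ∈ Sᗮ :=
          hUS (Submodule.orthogonalProjectionOnto U Y).2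
        have := Submodule.sub_mem _ h1 h2
        convert this using 1; abel_nf; exact Iff.rfl
      · have h1 : Y - (Submodule.orthogonalProjectionOnto U Y : EuclideanSpace ℝ (Fin n)) ∈ Uᗮ :=
          Submodule.sub_starProjection_mem_orthogonal Y
        have h2 : (Submodule.orthogonalProjectionOnto S Y : EuclideanSpace ℝ (Fin n)) ∈ Uᗮ :=
          hSU (Submodule.orthogonalProjectionOnto S Y).2
        have := Submodule.sub_mem _ h1 h2
        convert this using 1; abel_nf; exact Iff.rfl
  refine ⟨key, fun Y => ?_⟩
  set sY := (Submodule.orthogonalProjectionOnto S Y : EuclideanSpace ℝ (Fin n)) with hsY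
  set uY := (Submodule.orthogonalProjectionOnto U Y : EuclideanSpace ℝ (Fin n)) with huY
  -- projection of M_S Y onto U equals projection of Y onto U
  have hproj : (Submodule.orthogonalProjectionOnto U (Y - sY) : EuclideanSpace ℝ (Fin n)) = uY := by
    have : Submodule.orthogonalProjectionOnto U (Y - sY) =
        Submodule.orthogonalProjectionOnto U Y - Submodule.orthogonalProjectionOnto U sY := by
      rw [← map_sub]
    rw [this]
    have h0 : Submodule.orthogonalProjectionOnto U sY = 0 :=
      Submodule.orthogonalProjectionOnto_apply_of_mem_orthogonal (hSU (Submodule.orthogonalProjectionOnto S Y).2)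
    push_cast [h0]
    simp; rfl
  rw [key Y, hproj]
  have horth : ⟪sY, uY⟫ = 0 := real_inner_comm uY sY ▸
    (Submodule.mem_orthogonal U sY).1 (hSU (Submodule.orthogonalProjectionOnto S Y).2) uY
      (Submodule.orthogonalProjectionOnto U Y).2
  simp only [inner_sub_left, inner_sub_right, inner_add_right]
  linarith [real_inner_comm Y uY]
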